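/- arXiv:2511.05775 — 2 statements merged into one kernel-verified Lean document; each statement's English description precedes it below -/
import Mathlib

section
/- For ω ∈ ℝ³ with θ = ‖ω‖ ≠ 0, the kernel Q_r(ω) = ∫₀¹ s·exp(s[ω]×) ds has the closed form Q_r(ω) = (1/2)I + ((sin θ − θ cos θ)/θ³)[ω]× + (1/(2θ²) − sin θ/θ³ − (cos θ − 1)/θ⁴)[ω]×². -/
open Matrix Real

/-- Skew-symmetric (cross-product) matrix of a vector in ℝ³. -/
noncomputable def skew (ω : Fin 3 → ℝ) : Matrix (Fin 3) (Fin 3) ℝ :=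
  !![0, -ω 2, ω 1; ω 2, 0, -ω 0; -ω 1, ω 0, 0]


lemma skew_pow3 (w : Fin 3 → ℝ) :
    skew w ^ 3 = (-(w 0 ^ 2 + w 1 ^ 2 + w 2 ^ 2)) • skew w := by
  ext i j
  fin_cases i <;> fin_cases j <;>
    simp [skew, pow_succ, Matrix.mul_apply, Fin.sum_univ_succ] <;> ring

lemma norm_sq_eq (ω : EuclideanSpace ℝ (Fin 3)) :
    ‖ω‖ ^ 2 = ω 0 ^ 2 + ω 1 ^ 2 + ω 2 ^ 2 := by
  rw [EuclideanSpace.norm_eq, Real.sq_sqrt (by positivity)]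
  simp [Fin.sum_univ_three, Real.norm_eq_abs, sq_abs]

lemma skew_pow_odd (ω : EuclideanSpace ℝ (Fin 3)) (m : ℕ) :
    skew ω ^ (2 * m + 1) = ((-‖ω‖ ^ 2) ^ m) • skew ω := by
  have h3 : skew ω ^ 3 = (-‖ω‖ ^ 2) • skew ω := by
    rw [skew_pow3, norm_sq_eq]
  induction m with
  | zero => simp
  | succ m ih =>
      have : 2 * (m + 1) + 1 = (2 * m + 1) + 2 := by ring
      rw [this, pow_add, ih, smul_mul_assoc, ← pow_succ' (skew ω) 2]
      rw [show (2+1) = 3 from rfl, h3, smul_smul, ← pow_succ]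

lemma skew_pow_even (ω : EuclideanSpace ℝ (Fin 3)) (m : ℕ) :
    skew ω ^ (2 * (m + 1)) = ((-‖ω‖ ^ 2) ^ m) • (skew ω * skew ω) := by
  have : 2 * (m + 1) = (2 * m + 1) + 1 := by ring
  rw [this, pow_succ, skew_pow_odd, smul_mul_assoc]

/-- Matrix exponential on 3×3 real matrices. -/
noncomputable def mexp (A : Matrix (Fin 3) (Fin 3) ℝ) : Matrix (Fin 3) (Fin 3) ℝ :=
  letI : NormedRing (Matrix (Fin 3) (Fin 3) ℝ) := Matrix.linftyOpNormedRing
  letI : NormedAlgebra ℝ (Matrix (Fin 3) (Fin 3) ℝ) := Matrix.linftyOpNormedAlgebra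
  NormedSpace.exp A

set_option maxHeartbeats 1000000 in
lemma rodrigues (ω : EuclideanSpace ℝ (Fin 3)) (hω : ‖ω‖ ≠ 0) (s : ℝ) :
    mexp (s • skew ω) = (1 : Matrix (Fin 3) (Fin 3) ℝ)
      + (Real.sin (s * ‖ω‖) / ‖ω‖) • skew ω
      + ((1 - Real.cos (s * ‖ω‖)) / ‖ω‖ ^ 2) • (skew ω * skew ω) := by
  letI : NormedRing (Matrix (Fin 3) (Fin 3) ℝ) := Matrix.linftyOpNormedRing
  letI : NormedAlgebra ℝ (Matrix (Fin 3) (Fin 3) ℝ) := Matrix.linftyOpNormedAlgebra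
  rw [show mexp (s • skew ω) = NormedSpace.exp (s • skew ω) from rfl,
    NormedSpace.exp_eq_tsum (𝕂 := ℝ)]
  set θ := ‖ω‖ with hθ
  set K := skew ω with hK
  refine HasSum.tsum_eq ?_
  have hodd : HasSum (fun k : ℕ => ((Nat.factorial (2 * k + 1) : ℝ))⁻¹ • (s • K) ^ (2 * k + 1))
      ((Real.sin (s * θ) / θ) • K) := by
    have h1 := ((Real.hasSum_sin (s * θ)).div_const θ).smul_const K
    convert h1 using 2 with n
    rw [smul_pow, skew_pow_odd, smul_smul, smul_smul]
    congr 1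
    field_simp
    ring
  have heven : HasSum (fun k : ℕ => ((Nat.factorial (2 * k) : ℝ))⁻¹ • (s • K) ^ (2 * k))
      ((1 : Matrix (Fin 3) (Fin 3) ℝ) + ((1 - Real.cos (s * θ)) / θ ^ 2) • (K * K)) := by
    refine (hasSum_nat_add_iff' 1).mp ?_
    simp only [Finset.range_one, Finset.sum_singleton, Nat.mul_zero, pow_zero,
      Nat.factorial_zero, Nat.cast_one, inv_one, one_smul, mul_zero]
    rw [add_sub_cancel_left]
    have h1 := (hasSum_nat_add_iff'
      (f := fun n : ℕ => (-1 : ℝ) ^ n * (s * θ) ^ (2 * n) / (Nat.factorial (2 * n) : ℝ)) 1).mpr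
      (Real.hasSum_cos (s * θ))
    have h2 := (h1.neg.div_const (θ ^ 2)).smul_const (K * K)
    convert h2 using 2 with n
    · rfl
    · rw [smul_pow, skew_pow_even, smul_smul, smul_smul]
      congr 1
      field_simp
      ring
    · simp [Finset.range_one]
  have h := HasSum.even_add_odd
    (f := fun n : ℕ => ((Nat.factorial n : ℝ))⁻¹ • (s • K) ^ n) heven hodd
  convert h using 1
  · rfl
  abel

lemma integral_mul_sin (θ : ℝ) (hθ : θ ≠ 0) :
    ∫ s in (0:ℝ)..1, s * Real.sin (s * θ)
      = (Real.sin θ - θ * Real.cos θ) / θ ^ 2 := by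
  have key : ∀ s : ℝ, HasDerivAt
      (fun x => (Real.sin (x * θ) - x * θ * Real.cos (x * θ)) / θ ^ 2)
      (s * Real.sin (s * θ)) s := by
    intro s
    have hlin : HasDerivAt (fun x : ℝ => x * θ) θ s := by
      simpa using (hasDerivAt_id s).mul_const θ
    have h1 := hlin.sin
    have h2 := hlin.mul hlin.cos
    have h3 := (h1.sub h2).div_const (θ ^ 2)
    exact h3.congr_deriv (by field_simp; ring)
  rw [intervalIntegral.integral_eq_sub_of_hasDerivAt (fun s _ => key s)
    (by apply Continuous.intervalIntegrable; fun_prop)]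
  simp

lemma integral_mul_cos (θ : ℝ) (hθ : θ ≠ 0) :
    ∫ s in (0:ℝ)..1, s * Real.cos (s * θ)
      = (Real.cos θ + θ * Real.sin θ - 1) / θ ^ 2 := by
  have key : ∀ s : ℝ, HasDerivAt
      (fun x => (Real.cos (x * θ) + x * θ * Real.sin (x * θ)) / θ ^ 2)
      (s * Real.cos (s * θ)) s := by
    intro s
    have hlin : HasDerivAt (fun x : ℝ => x * θ) θ s := by
      simpa using (hasDerivAt_id s).mul_const θ
    have h1 := hlin.cos
    have h2 := hlin.mul hlin.sin
    have h3 := (h1.add h2).div_const (θ ^ 2)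
    exact h3.congr_deriv (by field_simp; ring)
  rw [intervalIntegral.integral_eq_sub_of_hasDerivAt (fun s _ => key s)
    (by apply Continuous.intervalIntegrable; fun_prop)]
  simp
  field_simp

/-- Closed form of the right translation kernel: for θ = ‖ω‖ ≠ 0,
Q_r(ω) = ∫₀¹ s·exp(s[ω]×) ds
       = ½I + ((sin θ − θ cos θ)/θ³)[ω]× + (1/(2θ²) − sin θ/θ³ − (cos θ−1)/θ⁴)[ω]×². -/
theorem Qr_closed_form (ω : EuclideanSpace ℝ (Fin 3)) (hω : ‖ω‖ ≠ 0) :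
    (Matrix.of fun i j => ∫ s in (0:ℝ)..1, s * mexp (s • skew ω) i j)
      = (1 / 2 : ℝ) • (1 : Matrix (Fin 3) (Fin 3) ℝ)
        + ((Real.sin ‖ω‖ - ‖ω‖ * Real.cos ‖ω‖) / ‖ω‖ ^ 3) • skew ω
        + (1 / (2 * ‖ω‖ ^ 2) - Real.sin ‖ω‖ / ‖ω‖ ^ 3
            - (Real.cos ‖ω‖ - 1) / ‖ω‖ ^ 4) • (skew ω * skew ω) := by
  ext i j
  set θ := ‖ω‖ with hθ
  set e := (1 : Matrix (Fin 3) (Fin 3) ℝ) i j with he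
  set k1 := skew ω i j with hk1
  set k2 := (skew ω * skew ω) i j with hk2
  have step1 : (∫ s in (0:ℝ)..1, s * mexp (s • skew ω) i j)
      = ∫ s in (0:ℝ)..1,
        (e * s + (k1 / θ) * (s * Real.sin (s * θ))
          + (k2 / θ ^ 2) * (s - s * Real.cos (s * θ))) := by
    refine intervalIntegral.integral_congr fun s _ => ?_
    rw [rodrigues ω hω s]
    simp only [Matrix.add_apply, Matrix.smul_apply, smul_eq_mul, ← he, ← hk1, ← hk2, ← hθ]
    field_simp
  have i1 : IntervalIntegrable (fun s : ℝ => e * s) MeasureTheory.volume 0 1 := by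
    apply Continuous.intervalIntegrable; fun_prop
  have i2 : IntervalIntegrable (fun s : ℝ => (k1 / θ) * (s * Real.sin (s * θ)))
      MeasureTheory.volume 0 1 := by
    apply Continuous.intervalIntegrable; fun_prop
  have i3 : IntervalIntegrable (fun s : ℝ => (k2 / θ ^ 2) * (s - s * Real.cos (s * θ)))
      MeasureTheory.volume 0 1 := by
    apply Continuous.intervalIntegrable; fun_prop
  have isub1 : IntervalIntegrable (fun s : ℝ => s) MeasureTheory.volume 0 1 := by
    apply Continuous.intervalIntegrable; fun_prop
  have isub2 : IntervalIntegrable (fun s : ℝ => s * Real.cos (s * θ))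
      MeasureTheory.volume 0 1 := by
    apply Continuous.intervalIntegrable; fun_prop
  have hid : (∫ s in (0:ℝ)..1, s) = 1 / 2 := by
    simp
  rw [Matrix.of_apply, step1, intervalIntegral.integral_add (i1.add i2) i3,
    intervalIntegral.integral_add i1 i2,
    intervalIntegral.integral_const_mul, intervalIntegral.integral_const_mul,
    intervalIntegral.integral_const_mul, intervalIntegral.integral_sub isub1 isub2,
    hid, integral_mul_sin θ hω, integral_mul_cos θ hω]
  simp only [Matrix.add_apply, Matrix.smul_apply, smul_eq_mul, ← he, ← hk1, ← hk2, ← hθ]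
  field_simp
  ring
end

section
/- Consider the closed-loop system ξ̇_p = −[ω̄(t)]×ξ_p − K_pξ_p + e_v, ė_v = −[ω̄(t)]×e_v − K_ve_v + Be_r, ė_r = −[ω̄(t)]×e_r − K_re_r, with K_p, K_v, K_r symmetric positive definite and B = −T̄[e_T]× a fixed matrix. If λ_min(K_r) > ‖B‖²/(2λ_min(K_v)), then the origin is exponentially stable: there exist c, α > 0 such that ‖(ξ_p(t), e_v(t), e_r(t))‖ ≤ c e^{−αt}‖(ξ_p(0), e_v(0), e_r(0))‖ for all t ≥ 0 and every solution. -/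
open Matrix Real

/-- Operator (Euclidean) norm of a 3×3 real matrix. -/
noncomputable def opNorm (B : Matrix (Fin 3) (Fin 3) ℝ) : ℝ :=
  ‖Matrix.toEuclideanCLM (𝕜 := ℝ) (n := Fin 3) B‖

lemma inner_skew (ω : Fin 3 → ℝ) (x : EuclideanSpace ℝ (Fin 3)) :
    (inner ℝ x (WithLp.toLp 2 ((skew ω).mulVec x)) : ℝ) = 0 := by
  simp [PiLp.inner_apply, skew, Matrix.mulVec, dotProduct, Fin.sum_univ_three,
    RCLike.inner_apply, PiLp.toLp_apply]
  ring

lemma inner_B_le (B : Matrix (Fin 3) (Fin 3) ℝ) (x y : EuclideanSpace ℝ (Fin 3)) :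
    (inner ℝ x (WithLp.toLp 2 (B.mulVec y)) : ℝ) ≤ opNorm B * ‖x‖ * ‖y‖ := by
  have h : WithLp.toLp 2 (B.mulVec y)
      = Matrix.toEuclideanCLM (𝕜 := ℝ) (n := Fin 3) B y := rfl
  rw [h]
  calc (inner ℝ x (Matrix.toEuclideanCLM (𝕜 := ℝ) (n := Fin 3) B y) : ℝ)
      ≤ ‖x‖ * ‖Matrix.toEuclideanCLM (𝕜 := ℝ) (n := Fin 3) B y‖ := real_inner_le_norm _ _
    _ ≤ ‖x‖ * (opNorm B * ‖y‖) :=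
        mul_le_mul_of_nonneg_left
          ((Matrix.toEuclideanCLM (𝕜 := ℝ) (n := Fin 3) B).le_opNorm y) (norm_nonneg x)
    _ = opNorm B * ‖x‖ * ‖y‖ := by ring

lemma rayleigh_le (A : Matrix (Fin 3) (Fin 3) ℝ) (hA : A.IsHermitian)
    (x : EuclideanSpace ℝ (Fin 3)) :
    (⨅ i, hA.eigenvalues i) * ‖x‖ ^ 2
      ≤ (inner ℝ x (WithLp.toLp 2 (A.mulVec x)) : ℝ) := by
  have hx : WithLp.toLp 2 (A.mulVec x) = Matrix.toEuclideanLin A x := rfl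
  rw [hx]
  set T := Matrix.toEuclideanLin A with hT
  have hsym : T.IsSymmetric := (Matrix.isHermitian_iff_isSymmetric).1 hA
  set b := hA.eigenvectorBasis with hb
  set μ := hA.eigenvalues with hμ
  have hTb : ∀ j, T (b j) = μ j • b j := by
    intro j
    have h := hA.mulVec_eigenvectorBasis j
    exact congrArg (WithLp.equiv 2 (Fin 3 → ℝ)).symm h
  have key : (inner ℝ x (T x) : ℝ) = ∑ j, μ j * (inner ℝ (b j) x : ℝ) ^ 2 := by
    rw [← b.sum_inner_mul_inner x (T x)]
    refine Finset.sum_congr rfl fun j _ => ?_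
    have h1 : (inner ℝ (b j) (T x) : ℝ) = μ j * (inner ℝ (b j) x : ℝ) := by
      rw [← hsym (b j) x, hTb j, inner_smul_left]
      simp
    rw [h1, real_inner_comm x (b j)]; ring
  have normsq : ‖x‖ ^ 2 = ∑ j, (inner ℝ (b j) x : ℝ) ^ 2 := by
    rw [← real_inner_self_eq_norm_sq, ← b.sum_inner_mul_inner x x]
    refine Finset.sum_congr rfl fun j _ => ?_
    rw [real_inner_comm x (b j)]; ring
  rw [key, normsq, Finset.mul_sum]
  refine Finset.sum_le_sum fun j _ => ?_
  have h1 : (⨅ i, μ i) ≤ μ j := ciInf_le (Set.Finite.bddBelow (Set.finite_range _)) j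
  exact mul_le_mul_of_nonneg_right h1 (sq_nonneg _)

lemma amgm1 (e l X Y : ℝ) (he : 0 ≤ e) (hl : 0 < l) :
    2*(e*(X*Y)) ≤ e*l*X^2 + e/l*Y^2 := by
  have key : (2*(e*(X*Y)) - e*l*X^2) * l ≤ e * Y^2 := by
    nlinarith [mul_nonneg he (sq_nonneg (l*X - Y))]
  have h2 : 2*(e*(X*Y)) - e*l*X^2 ≤ e*Y^2/l := (le_div_iff₀ hl).2 key
  have h3 : e*Y^2/l = e/l*Y^2 := by ring
  linarith

lemma amgm2 (b l Y Z : ℝ) (hl : 0 < l) :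
    2*(b*(Y*Z)) ≤ b^2/l*Y^2 + l*Z^2 := by
  have key : (2*(b*(Y*Z)) - l*Z^2) * l ≤ b^2 * Y^2 := by
    nlinarith [sq_nonneg (b*Y - l*Z)]
  have h2 : 2*(b*(Y*Z)) - l*Z^2 ≤ b^2*Y^2/l := (le_div_iff₀ hl).2 key
  have h3 : b^2*Y^2/l = b^2/l*Y^2 := by ring
  linarith

lemma gronwall_aux (V V' : ℝ → ℝ) (β : ℝ)
    (hV : ∀ t ≥ (0:ℝ), HasDerivAt V (V' t) t)
    (hle : ∀ t ≥ (0:ℝ), V' t ≤ -β * V t) :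
    ∀ t ≥ (0:ℝ), V t ≤ V 0 * Real.exp (-β * t) := by
  set W : ℝ → ℝ := fun t => V t * Real.exp (β * t) with hW
  have hWd : ∀ t ≥ (0:ℝ), HasDerivAt W (V' t * Real.exp (β * t) + V t * (β * Real.exp (β * t))) t := by
    intro t ht
    have h1 : HasDerivAt (fun t => Real.exp (β * t)) (β * Real.exp (β * t)) t := by
      have := (Real.hasDerivAt_exp (β * t)).comp t ((hasDerivAt_id t).const_mul β)
      simpa [mul_comm, Function.comp_def] using this
    exact (hV t ht).mul h1
  have hanti : AntitoneOn W (Set.Ici (0:ℝ)) := by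
    refine antitoneOn_of_deriv_nonpos (convex_Ici 0) ?_ ?_ ?_
    · exact fun t ht => ((hWd t ht).continuousAt).continuousWithinAt
    · intro t ht
      rw [interior_Ici] at ht
      exact ((hWd t (le_of_lt ht)).differentiableAt).differentiableWithinAt
    · intro t ht
      rw [interior_Ici] at ht
      rw [(hWd t (le_of_lt ht)).deriv]
      have h2 := hle t (le_of_lt ht)
      nlinarith [Real.exp_pos (β * t)]
  intro t ht
  have h3 : W t ≤ W 0 := hanti (Set.self_mem_Ici) ht ht
  have h4 : W 0 = V 0 := by simp [hW]
  rw [h4] at h3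
  have h5 : Real.exp (-β * t) * Real.exp (β * t) = 1 := by
    rw [← Real.exp_add]; ring_nf; exact Real.exp_zero
  calc V t = W t * Real.exp (-β * t) := by
        simp only [hW]
        rw [mul_assoc, ← Real.exp_add]
        simp
    _ ≤ V 0 * Real.exp (-β * t) :=
        mul_le_mul_of_nonneg_right h3 (le_of_lt (Real.exp_pos _))


/-- Exponential stability of the closed-loop log-linear backstepping error
dynamics: if λ_min(K_r) > ‖B‖²/(2λ_min(K_v)), the origin is exponentially
stable. -/
theorem closed_loop_exponential_stability
    (Kp Kv Kr : Matrix (Fin 3) (Fin 3) ℝ)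
    (hKp : Kp.PosDef) (hKv : Kv.PosDef) (hKr : Kr.PosDef)
    (Tbar : ℝ) (hT : 0 ≤ Tbar) (eT : EuclideanSpace ℝ (Fin 3)) (heT : ‖eT‖ = 1)
    (B : Matrix (Fin 3) (Fin 3) ℝ) (hB : B = -(Tbar • skew eT))
    (hgain : (⨅ i, hKr.1.eigenvalues i)
      > opNorm B ^ 2 / (2 * ⨅ i, hKv.1.eigenvalues i))
    (ωbar : ℝ → Fin 3 → ℝ)
    (ξp ev er : ℝ → EuclideanSpace ℝ (Fin 3))
    (hξp : ∀ t ≥ (0 : ℝ), HasDerivAt ξp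
      ((WithLp.equiv 2 (Fin 3 → ℝ)).symm (-((skew (ωbar t)).mulVec (ξp t)) - Kp.mulVec (ξp t) + WithLp.equiv 2 (Fin 3 → ℝ) (ev t) : Fin 3 → ℝ)) t)
    (hev : ∀ t ≥ (0 : ℝ), HasDerivAt ev
      (WithLp.toLp 2 (-((skew (ωbar t)).mulVec (ev t)) - Kv.mulVec (ev t) + B.mulVec (er t))) t)
    (her : ∀ t ≥ (0 : ℝ), HasDerivAt er
      (WithLp.toLp 2 (-((skew (ωbar t)).mulVec (er t)) - Kr.mulVec (er t))) t) :
    ∃ c > (0 : ℝ), ∃ α > (0 : ℝ), ∀ t ≥ (0 : ℝ),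
      Real.sqrt (‖ξp t‖ ^ 2 + ‖ev t‖ ^ 2 + ‖er t‖ ^ 2)
        ≤ c * Real.exp (-α * t)
            * Real.sqrt (‖ξp 0‖ ^ 2 + ‖ev 0‖ ^ 2 + ‖er 0‖ ^ 2) := by
    -- abbreviations
  set lp := ⨅ i, hKp.1.eigenvalues i with hlp_def
  set lv := ⨅ i, hKv.1.eigenvalues i with hlv_def
  set lr := ⨅ i, hKr.1.eigenvalues i with hlr_def
  set b := opNorm B with hb_def
  have hb0 : 0 ≤ b := norm_nonneg _
  have hminpos : ∀ (K : Matrix (Fin 3) (Fin 3) ℝ) (hK : K.PosDef),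
      0 < ⨅ i, hK.1.eigenvalues i := by
    intro K hK
    obtain ⟨j, hj⟩ := Finite.exists_min hK.1.eigenvalues
    have h1 : (⨅ i, hK.1.eigenvalues i) = hK.1.eigenvalues j :=
      le_antisymm (ciInf_le (Set.Finite.bddBelow (Set.finite_range _)) j) (le_ciInf hj)
    rw [h1]; exact hK.eigenvalues_pos j
  have hlp : 0 < lp := hminpos Kp hKp
  have hlv : 0 < lv := hminpos Kv hKv
  have hlr : 0 < lr := hminpos Kr hKr
  -- the gain condition
  have hδ : 0 < lv * lr - b ^ 2 / 2 := by
    rw [gt_iff_lt, div_lt_iff₀ (by linarith)] at hgain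
    nlinarith
  set δ := lv * lr - b ^ 2 / 2 with hδ_def
  set ε := min 1 (lp * δ / lr) with hε_def
  have hε0 : 0 < ε := lt_min one_pos (by positivity)
  have hε1 : ε ≤ 1 := min_le_left _ _
  have hel : ε / lp ≤ δ / lr := by
    have h1 : ε ≤ lp * δ / lr := min_le_right _ _
    have h2 : ε * lr ≤ lp * δ := (le_div_iff₀ hlr).1 h1
    rw [div_le_div_iff₀ hlp hlr]
    linarith
  set α := (1/2) * min lp (min (δ/lr) lr) with hα_def
  have hα0 : 0 < α := by
    apply mul_pos (by norm_num)
    exact lt_min hlp (lt_min (by positivity) hlr)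
  have h2αp : 2 * α ≤ lp := by
    have := min_le_left lp (min (δ/lr) lr); rw [hα_def]; linarith
  have h2αd : 2 * α ≤ δ / lr := by
    have h := (min_le_right lp (min (δ/lr) lr)).trans (min_le_left (δ/lr) lr)
    rw [hα_def]; linarith
  have h2αr : 2 * α ≤ lr := by
    have h := (min_le_right lp (min (δ/lr) lr)).trans (min_le_right (δ/lr) lr)
    rw [hα_def]; linarith
  -- Lyapunov function and its derivative
  set Dp : ℝ → EuclideanSpace ℝ (Fin 3) := fun t =>
    (WithLp.equiv 2 (Fin 3 → ℝ)).symm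
      (-((skew (ωbar t)).mulVec (ξp t)) - Kp.mulVec (ξp t)
        + WithLp.equiv 2 (Fin 3 → ℝ) (ev t)) with hDp_def
  set Dv : ℝ → EuclideanSpace ℝ (Fin 3) := fun t =>
    (WithLp.toLp 2 (-((skew (ωbar t)).mulVec (ev t)) - Kv.mulVec (ev t) + B.mulVec (er t)) :
      EuclideanSpace ℝ (Fin 3)) with hDv_def
  set Dr : ℝ → EuclideanSpace ℝ (Fin 3) := fun t =>
    (WithLp.toLp 2 (-((skew (ωbar t)).mulVec (er t)) - Kr.mulVec (er t)) : EuclideanSpace ℝ (Fin 3)) with hDr_def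
  set V : ℝ → ℝ := fun t => ε * (inner ℝ (ξp t) (ξp t) : ℝ)
    + (inner ℝ (ev t) (ev t) : ℝ) + (inner ℝ (er t) (er t) : ℝ) with hV_def
  set V' : ℝ → ℝ := fun t =>
    ε * ((inner ℝ (ξp t) (Dp t) : ℝ) + (inner ℝ (Dp t) (ξp t) : ℝ))
    + ((inner ℝ (ev t) (Dv t) : ℝ) + (inner ℝ (Dv t) (ev t) : ℝ))
    + ((inner ℝ (er t) (Dr t) : ℝ) + (inner ℝ (Dr t) (er t) : ℝ)) with hV'_def
  have hVd : ∀ t ≥ (0:ℝ), HasDerivAt V (V' t) t := by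
    intro t ht
    have h1 := HasDerivAt.inner (𝕜 := ℝ) (hξp t ht) (hξp t ht)
    have h2 := HasDerivAt.inner (𝕜 := ℝ) (hev t ht) (hev t ht)
    have h3 := HasDerivAt.inner (𝕜 := ℝ) (her t ht) (her t ht)
    exact ((h1.const_mul ε).add h2).add h3
  -- the key differential inequality
  have hbound : ∀ t ≥ (0:ℝ), V' t ≤ -(2*α) * V t := by
    intro t ht
    set X := ‖ξp t‖ with hX
    set Y := ‖ev t‖ with hY
    set Z := ‖er t‖ with hZ
    have hX0 : 0 ≤ X := norm_nonneg _
    have hY0 : 0 ≤ Y := norm_nonneg _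
    have hZ0 : 0 ≤ Z := norm_nonneg _
    have hip : (inner ℝ (ξp t) (Dp t) : ℝ) ≤ -(lp * X^2) + X * Y := by
      rw [hDp_def]
      simp only [WithLp.equiv_symm_apply, WithLp.toLp_add, WithLp.toLp_sub, WithLp.toLp_neg,
        WithLp.equiv_apply, WithLp.toLp_ofLp]
      rw [inner_add_right, inner_sub_right, inner_neg_right, inner_skew]
      have h1 := rayleigh_le Kp hKp.1 (ξp t)
      have h2 := real_inner_le_norm (ξp t) (ev t)
      rw [← hlp_def] at h1
      linarith
    have hiv : (inner ℝ (ev t) (Dv t) : ℝ) ≤ -(lv * Y^2) + b * (Y * Z) := by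
      have hrfl : Dv t = WithLp.toLp 2
          (-((skew (ωbar t)).mulVec (ev t)) - Kv.mulVec (ev t) + B.mulVec (er t)) := rfl
      rw [hrfl]
      simp only [WithLp.toLp_add, WithLp.toLp_sub, WithLp.toLp_neg]
      rw [inner_add_right, inner_sub_right, inner_neg_right, inner_skew]
      have h1 := rayleigh_le Kv hKv.1 (ev t)
      have h2 := inner_B_le B (ev t) (er t)
      rw [← hlv_def] at h1
      rw [← hb_def] at h2
      have : b * Y * Z = b * (Y * Z) := by ring
      linarith [this ▸ h2]
    have hir : (inner ℝ (er t) (Dr t) : ℝ) ≤ -(lr * Z^2) := by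
      have hrfl : Dr t = WithLp.toLp 2
          (-((skew (ωbar t)).mulVec (er t)) - Kr.mulVec (er t)) := rfl
      rw [hrfl]
      simp only [WithLp.toLp_sub, WithLp.toLp_neg]
      rw [inner_sub_right, inner_neg_right, inner_skew]
      have h1 := rayleigh_le Kr hKr.1 (er t)
      rw [← hlr_def] at h1
      linarith
    have hVt : V t = ε * X^2 + Y^2 + Z^2 := by
      simp only [hV_def, real_inner_self_eq_norm_sq, hX, hY, hZ]
    have hV't : V' t = 2*ε*(inner ℝ (ξp t) (Dp t) : ℝ) + 2*(inner ℝ (ev t) (Dv t) : ℝ)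
        + 2*(inner ℝ (er t) (Dr t) : ℝ) := by
      simp only [hV'_def]
      rw [real_inner_comm (Dp t) (ξp t), real_inner_comm (Dv t) (ev t),
        real_inner_comm (Dr t) (er t)]
      ring
    rw [hVt, hV't]
    -- AM-GM absorptions
    have S1 : 2*(ε*(X*Y)) ≤ ε*lp*X^2 + ε/lp*Y^2 := amgm1 ε lp X Y hε0.le hlp
    have S2 : 2*(b*(Y*Z)) ≤ b^2/lr*Y^2 + lr*Z^2 := amgm2 b lr Y Z hlr
    have hcoef : b^2/lr = 2*lv - 2*(δ/lr) := by
      rw [hδ_def]; field_simp; ring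
    have q : (ε/lp)*Y^2 ≤ (δ/lr)*Y^2 := mul_le_mul_of_nonneg_right hel (sq_nonneg Y)
    have p1 : (2*α)*(ε*X^2) ≤ lp*(ε*X^2) :=
      mul_le_mul_of_nonneg_right h2αp (by positivity)
    have p2 : (2*α)*Y^2 ≤ (δ/lr)*Y^2 := mul_le_mul_of_nonneg_right h2αd (sq_nonneg Y)
    have p3 : (2*α)*Z^2 ≤ lr*Z^2 := mul_le_mul_of_nonneg_right h2αr (sq_nonneg Z)
    have e1 : 2*ε*(inner ℝ (ξp t) (Dp t) : ℝ) ≤ 2*ε*(-(lp * X^2) + X * Y) :=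
      mul_le_mul_of_nonneg_left hip (by positivity)
    have e2 : 2*(inner ℝ (ev t) (Dv t) : ℝ) ≤ 2*(-(lv * Y^2) + b * (Y * Z)) := by linarith only [hiv]
    have e3 : 2*(inner ℝ (er t) (Dr t) : ℝ) ≤ 2*(-(lr * Z^2)) := by linarith only [hir]
    have hcoefY : b^2/lr*Y^2 = (2*lv)*Y^2 - 2*((δ/lr)*Y^2) := by rw [hcoef]; ring
    linarith only [e1, e2, e3, S1, S2, hcoefY, q, p1, p2, p3]
  -- Gronwall
  have hVle := gronwall_aux V V' (2*α) hVd hbound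
  refine ⟨Real.sqrt (1/ε), Real.sqrt_pos.2 (by positivity), α, hα0, ?_⟩
  intro t ht
  have hVt : V t = ε * ‖ξp t‖^2 + ‖ev t‖^2 + ‖er t‖^2 := by
    simp only [hV_def, real_inner_self_eq_norm_sq]
  have hV0 : V 0 = ε * ‖ξp 0‖^2 + ‖ev 0‖^2 + ‖er 0‖^2 := by
    simp only [hV_def, real_inner_self_eq_norm_sq]
  set St := ‖ξp t‖^2 + ‖ev t‖^2 + ‖er t‖^2 with hSt
  set S0 := ‖ξp 0‖^2 + ‖ev 0‖^2 + ‖er 0‖^2 with hS0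
  have hSt0 : 0 ≤ St := by positivity
  have hS00 : 0 ≤ S0 := by positivity
  have h1 : ε * St ≤ V t := by
    rw [hVt, hSt]
    have hy : ε * ‖ev t‖^2 ≤ ‖ev t‖^2 := mul_le_of_le_one_left (sq_nonneg _) hε1
    have hz : ε * ‖er t‖^2 ≤ ‖er t‖^2 := mul_le_of_le_one_left (sq_nonneg _) hε1
    linarith only [hy, hz]
  have h2 : V 0 ≤ S0 := by
    rw [hV0, hS0]
    have hx : ε * ‖ξp 0‖^2 ≤ ‖ξp 0‖^2 := mul_le_of_le_one_left (sq_nonneg _) hε1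
    linarith only [hx]
  have h3 : V t ≤ V 0 * Real.exp (-(2*α) * t) := hVle t ht
  have hexp0 : (0:ℝ) < Real.exp (-(2*α)*t) := Real.exp_pos _
  have h4 : ε * St ≤ S0 * Real.exp (-(2*α)*t) := by
    calc ε * St ≤ V t := h1
      _ ≤ V 0 * Real.exp (-(2*α) * t) := h3
      _ ≤ S0 * Real.exp (-(2*α)*t) := mul_le_mul_of_nonneg_right h2 hexp0.le
  have h5 : St ≤ (1/ε) * Real.exp (-(2*α)*t) * S0 := by
    rw [div_mul_eq_mul_div, div_mul_eq_mul_div, le_div_iff₀ hε0]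
    calc St * ε = ε * St := by ring
      _ ≤ S0 * Real.exp (-(2*α)*t) := h4
      _ = 1 * Real.exp (-(2*α)*t) * S0 := by ring
  calc Real.sqrt St ≤ Real.sqrt ((1/ε) * Real.exp (-(2*α)*t) * S0) := Real.sqrt_le_sqrt h5
    _ = Real.sqrt (1/ε) * Real.exp (-α*t) * Real.sqrt S0 := by
        rw [Real.sqrt_mul (by positivity), Real.sqrt_mul (by positivity)]
        congr 1
        congr 1
        have he : Real.exp (-(2*α)*t) = (Real.exp (-α*t))^2 := by
          rw [sq, ← Real.exp_add]; ring_nf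
        rw [he, Real.sqrt_sq (Real.exp_nonneg _)]
end
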